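/- For all positive integers r and p, there is a positive integer m = m(r,p) such that every graph G containing a (≤p)-subdivision of K_m as a subgraph contains either K_{p,p} as a subgraph or a proper (≤p)-subdivision of K_{r,r} as an induced subgraph. -/

import Mathlib

section Ramsey

variable {α : Type} [Fintype α] [DecidableEq α] [Nonempty α]

/-- Ramsey property: `N` works for `k`-uniform colorings with colors `α`, target size `n`. -/
def RamseyProp (k : ℕ) (α : Type) (n : ℕ) (N : ℕ) : Prop :=
  ∀ (χ : Finset ℕ → α) (A : Finset ℕ), N ≤ A.card →
    ∃ S ⊆ A, S.card = n ∧ ∃ c₀, ∀ T ⊆ S, T.card = k → χ T = c₀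

lemma ramsey_zero (n : ℕ) : RamseyProp 0 α n n := by
  intro χ A hA
  obtain ⟨S, hSA, hScard⟩ := Finset.exists_subset_card_eq hA
  refine ⟨S, hSA, hScard, χ ∅, fun T _ hT => ?_⟩
  rw [Finset.card_eq_zero] at hT
  rw [hT]

lemma ramsey_seq (k : ℕ) (Nk : ℕ → ℕ) (hNk : ∀ n, RamseyProp k α n (Nk n))
    (χ : Finset ℕ → α) :
    ∀ (t : ℕ) (A : Finset ℕ),
      (Nat.rec 0 (fun _ g => Nk g + 1) t : ℕ) ≤ A.card →
      ∃ (x : ℕ → ℕ) (c : ℕ → α),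
        (∀ i < t, x i ∈ A) ∧
        (∀ i j, i < j → j < t → x i ≠ x j) ∧
        (∀ i < t, ∀ T ⊆ (Finset.Ioo i t).image x, T.card = k →
          χ (insert (x i) T) = c i) := by
  intro t
  induction t with
  | zero =>
    intro A _
    exact ⟨id, fun _ => Classical.arbitrary α, by omega, by omega, by omega⟩
  | succ t ih =>
    intro A hA
    have hA1 : 0 < A.card := by
      simp only [] at hA; omega
    obtain ⟨x₀, hx₀⟩ := Finset.card_pos.mp hA1
    have herase : Nk (Nat.rec 0 (fun _ g => Nk g + 1) t : ℕ) ≤ (A.erase x₀).card := by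
      rw [Finset.card_erase_of_mem hx₀]
      simp only [] at hA; omega
    obtain ⟨S, hSA, hScard, c₀, hc₀⟩ :=
      hNk _ (fun T => χ (insert x₀ T)) (A.erase x₀) herase
    obtain ⟨x', c', hmem, hinj, hmono⟩ := ih S hScard.ge
    refine ⟨fun i => if i = 0 then x₀ else x' (i - 1),
           fun i => if i = 0 then c₀ else c' (i - 1), ?_, ?_, ?_⟩
    · intro i hi
      by_cases h : i = 0
      · simp [h, hx₀]
      · simp only [h, if_false]
        exact (Finset.erase_subset _ _) (hSA (hmem _ (by omega)))
    · intro i j hij hjt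
      have hj : j ≠ 0 := by omega
      by_cases h : i = 0
      · simp only [h, if_pos rfl, hj, if_false]
        intro heq
        have := hSA (hmem (j - 1) (by omega))
        rw [← heq] at this
        exact (Finset.notMem_erase _ _) this
      · simp only [h, if_false, hj, if_false]
        exact hinj _ _ (by omega) (by omega)
    · intro i hi T hT hTcard
      by_cases h : i = 0
      · subst h
        simp only [if_pos rfl]
        have hTS : T ⊆ S := by
          intro u hu
          obtain ⟨j, hj, hju⟩ := Finset.mem_image.mp (hT hu)
          rw [Finset.mem_Ioo] at hj
          have hj0 : j ≠ 0 := by omega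
          simp only [hj0, if_false] at hju
          rw [← hju]
          exact hmem _ (by omega)
        exact hc₀ T hTS hTcard
      · obtain ⟨i', rfl⟩ : ∃ i', i = i' + 1 := ⟨i - 1, by omega⟩
        simp only [Nat.succ_ne_zero, if_false, Nat.add_sub_cancel]
        have hT' : T ⊆ (Finset.Ioo i' t).image x' := by
          intro u hu
          obtain ⟨j, hj, hju⟩ := Finset.mem_image.mp (hT hu)
          rw [Finset.mem_Ioo] at hj
          have hj0 : j ≠ 0 := by omega
          simp only [hj0, if_false] at hju
          exact Finset.mem_image.mpr ⟨j - 1, Finset.mem_Ioo.mpr (by omega), hju⟩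
        exact hmono i' (by omega) T hT' hTcard

theorem ramsey_exists (k n : ℕ) : ∃ N, RamseyProp k α n N := by
  induction k generalizing n with
  | zero => exact ⟨n, ramsey_zero n⟩
  | succ k ih =>
    choose Nk hNk using fun n => ih n
    set g : ℕ → ℕ := fun t => (Nat.rec 0 (fun _ g => Nk g + 1) t : ℕ) with hg
    set L := Fintype.card α * n + 1 with hL
    refine ⟨g L, ?_⟩
    intro χ A hA
    obtain ⟨x, c, hmem, hinj, hmono⟩ := ramsey_seq k Nk hNk χ L A hA
    have hmaps : ∀ i ∈ Finset.range L, c i ∈ (Finset.univ : Finset α) :=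
      fun i _ => Finset.mem_univ _
    obtain ⟨y, _, hy⟩ := Finset.exists_le_card_fiber_of_mul_le_card_of_maps_to hmaps
      Finset.univ_nonempty (n := n) (by rw [Finset.card_range]; simp [hL])
    obtain ⟨I, hIsub, hIcard⟩ := Finset.exists_subset_card_eq hy
    have hIL : ∀ i ∈ I, i < L := fun i hi =>
      Finset.mem_range.mp (Finset.mem_filter.mp (hIsub hi)).1
    have hIy : ∀ i ∈ I, c i = y := fun i hi =>
      (Finset.mem_filter.mp (hIsub hi)).2
    have hinjI : Set.InjOn x I := by
      intro i hi j hj hxij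
      by_contra hne
      rcases Nat.lt_or_ge i j with h | h
      · exact hinj i j h (hIL j hj) hxij
      · exact hinj j i (by omega) (hIL i hi) hxij.symm
    refine ⟨I.image x, ?_, ?_, y, ?_⟩
    · intro u hu
      obtain ⟨i, hi, rfl⟩ := Finset.mem_image.mp hu
      exact hmem i (hIL i hi)
    · rw [Finset.card_image_of_injOn hinjI, hIcard]
    · intro T hT hTcard
      set J := I.filter (fun j => x j ∈ T) with hJ
      have hJI : J ⊆ I := Finset.filter_subset _ _
      have himJ : J.image x = T := by
        apply Finset.Subset.antisymm
        · intro u hu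
          obtain ⟨j, hj, rfl⟩ := Finset.mem_image.mp hu
          exact (Finset.mem_filter.mp hj).2
        · intro u hu
          obtain ⟨j, hj, rfl⟩ := Finset.mem_image.mp (hT hu)
          exact Finset.mem_image.mpr ⟨j, Finset.mem_filter.mpr ⟨hj, hu⟩, rfl⟩
      have hJcard : J.card = k + 1 := by
        rw [← hTcard, ← himJ]
        exact (Finset.card_image_of_injOn (hinjI.mono (by exact_mod_cast hJI))).symm
      have hJne : J.Nonempty := Finset.card_pos.mp (by omega)
      set i₀ := J.min' hJne with hi₀
      have hi₀J : i₀ ∈ J := J.min'_mem hJne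
      have hTeq : T = insert (x i₀) ((J.erase i₀).image x) := by
        rw [← himJ]
        conv_lhs => rw [← Finset.insert_erase hi₀J]
        rw [Finset.image_insert]
      have hT'sub : (J.erase i₀).image x ⊆ (Finset.Ioo i₀ L).image x := by
        intro u hu
        obtain ⟨j, hj, rfl⟩ := Finset.mem_image.mp hu
        have hjJ := Finset.mem_of_mem_erase hj
        have hjne := Finset.ne_of_mem_erase hj
        refine Finset.mem_image.mpr ⟨j, Finset.mem_Ioo.mpr ⟨?_, hIL j (hJI hjJ)⟩, rfl⟩
        exact lt_of_le_of_ne (J.min'_le j hjJ) (Ne.symm hjne)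
      have hT'card : ((J.erase i₀).image x).card = k := by
        rw [Finset.card_image_of_injOn (hinjI.mono (by
          intro a ha
          exact hJI (Finset.mem_of_mem_erase ha)))]
        rw [Finset.card_erase_of_mem hi₀J, hJcard]; omega
      rw [hTeq, hmono i₀ (hIL i₀ (hJI hi₀J)) _ hT'sub hT'card]
      exact hIy i₀ (hJI hi₀J)

end Ramsey

open SimpleGraph

section Walks

variable {V : Type} {G : SimpleGraph V}

lemma getVert_mem_support' {u v : V} (w : G.Walk u v) {i : ℕ} (hi : i ≤ w.length) :
    w.getVert i ∈ w.support :=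
  Walk.mem_support_iff_exists_getVert.mpr ⟨i, rfl, hi⟩

lemma getVert_inj_of_isPath {u v : V} {w : G.Walk u v} (hw : w.IsPath) :
    ∀ i j, i ≤ w.length → j ≤ w.length → w.getVert i = w.getVert j → i = j := by
  induction w with
  | nil => intro i j hi hj _; simp at hi hj; omega
  | cons h p ih =>
    rw [Walk.cons_isPath_iff] at hw
    intro i j hi hj heq
    match i, j with
    | 0, 0 => rfl
    | 0, j + 1 =>
      exfalso
      apply hw.2
      rw [Walk.getVert_zero, Walk.getVert_cons_succ] at heq
      rw [heq]
      exact getVert_mem_support' p (by simpa using hj)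
    | i + 1, 0 =>
      exfalso
      apply hw.2
      rw [Walk.getVert_zero, Walk.getVert_cons_succ] at heq
      rw [← heq]
      exact getVert_mem_support' p (by simpa using hi)
    | i + 1, j + 1 =>
      rw [Walk.getVert_cons_succ, Walk.getVert_cons_succ] at heq
      have := ih hw.1 i j (by simpa using hi) (by simpa using hj) heq
      omega

lemma edge_of_length_one {u v : V} {w : G.Walk u v} (h : w.length = 1) :
    s(u, v) ∈ w.edges := by
  match w with
  | Walk.nil => simp at h
  | Walk.cons hadj Walk.nil => simp
  | Walk.cons hadj (Walk.cons h' p) => simp [Walk.length_cons] at h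

/-- From any walk we can extract a *chordless* path with the same ends,
smaller length and support inside the walk's support. -/
lemma exists_chordless [DecidableEq V] {u v : V} (w : G.Walk u v) :
    ∃ q : G.Walk u v, q.IsPath ∧ q.length ≤ w.length ∧
      (∀ x, x ∈ q.support → x ∈ w.support) ∧
      (∀ x y, x ∈ q.support → y ∈ q.support → G.Adj x y → s(x, y) ∈ q.edges) := by
  classical
  have hex : ∃ n, ∃ z : G.Walk u v, (∀ x ∈ z.support, x ∈ w.support) ∧ z.length = n :=
    ⟨w.length, w, fun _ h => h, rfl⟩
  set n₀ := Nat.find hex with hn₀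
  obtain ⟨z, hzsub, hzlen⟩ := Nat.find_spec hex
  have hn₀le : n₀ ≤ w.length := Nat.find_min' hex ⟨w, fun _ h => h, rfl⟩
  set q := z.bypass with hq
  have hqpath : q.IsPath := Walk.bypass_isPath z
  have hqsub : ∀ x, x ∈ q.support → x ∈ w.support :=
    fun x hx => hzsub x (Walk.support_bypass_subset z hx)
  have hqmin : n₀ ≤ q.length := Nat.find_min' hex ⟨q, fun x hx => hqsub x hx, rfl⟩
  have hqlen : q.length = n₀ := le_antisymm (le_trans (Walk.length_bypass_le z) (le_of_eq hzlen)) hqmin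
  refine ⟨q, hqpath, by omega, hqsub, ?_⟩
  intro x y hx hy hadj
  by_contra hne
  -- key: any subsegment of q from x to y (or y to x) has length ≥ 2
  have hxy : x ≠ y := hadj.ne
  have hcon : ∀ (q' : G.Walk u v), (∀ a ∈ q'.support, a ∈ q.support) →
      q'.length < q.length → False := by
    intro q' hsub hlen
    have : n₀ ≤ q'.length := Nat.find_min' hex ⟨q', fun a ha => hqsub a (hsub a ha), rfl⟩
    omega
  rw [← Walk.take_spec q hx] at hy
  rcases (Walk.mem_support_append_iff _ _).mp hy with hy1 | hy2
  · -- y occurs before x in q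
    set t := q.takeUntil x hx with ht
    set d := q.dropUntil x hx with hd
    set t4 := t.takeUntil y hy1 with ht4
    set t5 := t.dropUntil y hy1 with ht5
    have ht5len : 2 ≤ t5.length := by
      rcases Nat.lt_or_ge t5.length 2 with h2 | h2
      · interval_cases h : t5.length
        · exact absurd (Walk.eq_of_length_eq_zero h) (Ne.symm hxy)
        · exact absurd ((Sym2.eq_swap (a := y) (b := x)) ▸ edge_of_length_one h : s(x,y) ∈ t5.edges)
            (fun hmem => hne (Walk.edges_takeUntil_subset _ _ (Walk.edges_dropUntil_subset _ _ hmem)))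
      · exact h2
    refine hcon (t4.append (Walk.cons hadj.symm d)) ?_ ?_
    · intro a ha
      rcases (Walk.mem_support_append_iff _ _).mp ha with h | h
      · exact Walk.support_takeUntil_subset _ _ (Walk.support_takeUntil_subset _ _ h)
      · rw [Walk.support_cons] at h
        rcases List.mem_cons.mp h with rfl | h
        · exact Walk.support_takeUntil_subset _ _ hy1
        · exact Walk.support_dropUntil_subset _ _ h
    · have e1 : t4.length + t5.length = t.length := by
        have := congrArg Walk.length (Walk.take_spec t hy1)
        rwa [Walk.length_append] at this
      have e2 : t.length + d.length = q.length := by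
        have := congrArg Walk.length (Walk.take_spec q hx)
        rwa [Walk.length_append] at this
      rw [Walk.length_append, Walk.length_cons]
      omega
  · -- y occurs after x in q
    set t := q.takeUntil x hx with ht
    set d := q.dropUntil x hx with hd
    set t2 := d.takeUntil y hy2 with ht2
    set t3 := d.dropUntil y hy2 with ht3
    have ht2len : 2 ≤ t2.length := by
      rcases Nat.lt_or_ge t2.length 2 with h2 | h2
      · interval_cases h : t2.length
        · exact absurd (Walk.eq_of_length_eq_zero h) hxy
        · exact absurd (edge_of_length_one h)
            (fun hmem => hne (Walk.edges_dropUntil_subset _ _ (Walk.edges_takeUntil_subset _ _ hmem)))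
      · exact h2
    refine hcon (t.append (Walk.cons hadj t3)) ?_ ?_
    · intro a ha
      rcases (Walk.mem_support_append_iff _ _).mp ha with h | h
      · exact Walk.support_takeUntil_subset _ _ h
      · rw [Walk.support_cons] at h
        rcases List.mem_cons.mp h with rfl | h
        · exact hx
        · exact Walk.support_dropUntil_subset _ _ (Walk.support_dropUntil_subset _ _ h)
    · have e1 : t2.length + t3.length = d.length := by
        have := congrArg Walk.length (Walk.take_spec d hy2)
        rwa [Walk.length_append] at this
      have e2 : t.length + d.length = q.length := by
        have := congrArg Walk.length (Walk.take_spec q hx)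
        rwa [Walk.length_append] at this
      rw [Walk.length_append, Walk.length_cons]
      omega

end Walks

open SimpleGraph

section FamPart

/-- Color used for the Ramsey argument: lengths of the six paths determined by a
4-tuple of branch vertices, together with the adjacency data of all their
position-indexed vertices. -/
abbrev RColor (p : ℕ) : Type :=
  (Fin 6 → Fin (p + 2)) × (Fin 6 → Fin (p + 2) → Fin 6 → Fin (p + 2) → Bool)

/-- The six ordered pairs from a sorted 4-tuple. -/
def pairs6 {m : ℕ} (a b c d : Fin m) : Fin 6 → Fin m × Fin m
  | 0 => (a, b) | 1 => (a, c) | 2 => (a, d) | 3 => (b, c) | 4 => (b, d) | 5 => (c, d)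

/-- A clean family of chordless internally disjoint paths joining branch vertices. -/
structure Fam {V : Type} (G : SimpleGraph V) (p m : ℕ) where
  f : Fin m → V
  q : ∀ a b : Fin m, a < b → G.Walk (f a) (f b)
  finj : Function.Injective f
  path : ∀ a b h, (q a b h).IsPath
  lenle : ∀ a b h, (q a b h).length ≤ p + 1
  chord : ∀ a b h x y, x ∈ (q a b h).support → y ∈ (q a b h).support →
    G.Adj x y → s(x, y) ∈ (q a b h).edges
  branch : ∀ c a b h, f c ∈ (q a b h).support → c = a ∨ c = b
  inter : ∀ a b a' b' h h', s(a, b) ≠ s(a', b') → ∀ x, x ∈ (q a b h).support →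
    x ∈ (q a' b' h').support → (x = f a ∨ x = f b) ∧ (x = f a' ∨ x = f b')

variable {V : Type} {G : SimpleGraph V} {p m : ℕ}

def Fam.pv (F : Fam G p m) (e : Fin m × Fin m) (s : ℕ) : V :=
  if h : e.1 < e.2 then (F.q e.1 e.2 h).getVert s else F.f e.1

def Fam.plen (F : Fam G p m) (e : Fin m × Fin m) : ℕ :=
  if h : e.1 < e.2 then (F.q e.1 e.2 h).length else 0

noncomputable def Fam.col (F : Fam G p m) (a b c d : Fin m) : RColor p :=
  (fun i => ⟨min (F.plen (pairs6 a b c d i)) (p + 1), by omega⟩,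
   fun i s j t => @decide
     (G.Adj (F.pv (pairs6 a b c d i) s) (F.pv (pairs6 a b c d j) t))
     (Classical.propDecidable _))

variable {F : Fam G p m}

lemma Fam.pv_eq {a b : Fin m} (h : a < b) (s : ℕ) :
    F.pv (a, b) s = (F.q a b h).getVert s := dif_pos h

lemma Fam.plen_eq {a b : Fin m} (h : a < b) :
    F.plen (a, b) = (F.q a b h).length := dif_pos h

lemma Fam.len1 {a b : Fin m} (h : a < b) : 1 ≤ (F.q a b h).length := by
  by_contra hc
  have h0 : (F.q a b h).length = 0 := by omega
  exact absurd (F.finj (SimpleGraph.Walk.eq_of_length_eq_zero h0)) h.ne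

lemma Fam.pv_mem {a b : Fin m} (h : a < b) (s : ℕ) :
    F.pv (a, b) s ∈ (F.q a b h).support := by
  rw [F.pv_eq h]
  rcases le_or_gt s (F.q a b h).length with hs | hs
  · exact SimpleGraph.Walk.mem_support_iff_exists_getVert.mpr ⟨s, rfl, hs⟩
  · rw [SimpleGraph.Walk.getVert_of_length_le _ hs.le]
    exact SimpleGraph.Walk.end_mem_support _

lemma Fam.pv_zero {a b : Fin m} (h : a < b) : F.pv (a, b) 0 = F.f a := by
  rw [F.pv_eq h, SimpleGraph.Walk.getVert_zero]

lemma Fam.pv_last {a b : Fin m} (h : a < b) :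
    F.pv (a, b) ((F.q a b h).length) = F.f b := by
  rw [F.pv_eq h, SimpleGraph.Walk.getVert_length]

lemma sym2_ne_of_sorted {a b a' b' : Fin m} (h : a < b) (h' : a' < b')
    (hne : ¬(a = a' ∧ b = b')) : s(a, b) ≠ s(a', b') := by
  intro hc
  rw [Sym2.eq_iff] at hc
  rcases hc with ⟨rfl, rfl⟩ | ⟨rfl, rfl⟩
  · exact hne ⟨rfl, rfl⟩
  · exact absurd (h.trans h') (lt_irrefl _)

/-- Two distinct paths of the family intersect only in common branch endpoints. -/
lemma Fam.shared {a b a' b' : Fin m} (h : a < b) (h' : a' < b')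
    (hne : ¬(a = a' ∧ b = b')) {x : V} (hx : x ∈ (F.q a b h).support)
    (hx' : x ∈ (F.q a' b' h').support) :
    ∃ c, x = F.f c ∧ (c = a ∨ c = b) ∧ (c = a' ∨ c = b') := by
  obtain ⟨h1, h2⟩ := F.inter a b a' b' h h' (sym2_ne_of_sorted h h' hne) x hx hx'
  rcases h1 with h1 | h1
  · refine ⟨a, h1, Or.inl rfl, ?_⟩
    rcases h2 with h2 | h2
    · exact Or.inl (F.finj (h1.symm.trans h2))
    · exact Or.inr (F.finj (h1.symm.trans h2))
  · refine ⟨b, h1, Or.inr rfl, ?_⟩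
    rcases h2 with h2 | h2
    · exact Or.inl (F.finj (h1.symm.trans h2))
    · exact Or.inr (F.finj (h1.symm.trans h2))

/-- Build an injective homomorphism from `K_{p,p}` out of two systems of vertices. -/
lemma kpp_builder {p : ℕ} (U W : Fin p → V)
    (hU : Function.Injective U) (hW : Function.Injective W)
    (hUW : ∀ a b, U a ≠ W b) (hadj : ∀ a b, G.Adj (U a) (W b)) :
    ∃ g : completeBipartiteGraph (Fin p) (Fin p) →g G, Function.Injective g := by
  refine ⟨⟨Sum.elim U W, ?_⟩, ?_⟩
  · rintro (a | a) (b | b) hab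
    · simp [completeBipartiteGraph] at hab
    · exact hadj a b
    · exact (hadj b a).symm
    · simp [completeBipartiteGraph] at hab
  · rintro (a | a) (b | b) hab
    · rw [hU (hab : U a = U b)]
    · exact absurd (hab : U a = W b) (hUW a b)
    · exact absurd ((hab : W a = U b)).symm (hUW b a)
    · rw [hW (hab : W a = W b)]

lemma sorted_quad_list {a b c d : ℕ} (h1 : a < b) (h2 : b < c) (h3 : c < d) :
    ({a, b, c, d} : Finset ℕ).sort (· ≤ ·) = [a, b, c, d] := by
  apply (fun hp h1 h2 => List.Perm.eq_of_pairwise' h1 h2 hp)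
    (List.perm_of_nodup_nodup_toFinset_eq (Finset.sort_nodup _ _) (by simp; omega) ?_)
    (Finset.pairwise_sort _ _) (by simp [List.Pairwise, List.isChain_iff_pairwise]; omega)
  · rw [Finset.sort_toFinset]
    ext x
    simp

lemma card_quad {a b c d : ℕ} (h1 : a < b) (h2 : b < c) (h3 : c < d) :
    ({a, b, c, d} : Finset ℕ).card = 4 := by
  have := sorted_quad_list h1 h2 h3
  have hlen := Finset.length_sort (α := ℕ) (· ≤ ·) (s := {a, b, c, d})
  rw [this] at hlen
  exact hlen.symm

end FamPart
section FamPart2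
variable {V : Type} {G : SimpleGraph V} {p m : ℕ} {F : Fam G p m}

lemma Fam.getVert_inj {a b : Fin m} (h : a < b) {i j : ℕ}
    (hi : i ≤ (F.q a b h).length) (hj : j ≤ (F.q a b h).length)
    (heq : (F.q a b h).getVert i = (F.q a b h).getVert j) : i = j :=
  getVert_inj_of_isPath (F.path a b h) i j hi hj heq

lemma Fam.pv_ne_shareLeft {a b b' : Fin m} (hab : a < b) (hab' : a < b')
    (hbb' : b ≠ b') {s t : ℕ} (hs : 1 ≤ s) (hsl : s ≤ (F.q a b hab).length)
    (ht : 1 ≤ t) (htl : t ≤ (F.q a b' hab').length) :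
    F.pv (a, b) s ≠ F.pv (a, b') t := by
  intro heq
  have h1 := F.pv_mem hab s
  have h2 := F.pv_mem hab' t
  rw [heq] at h1
  obtain ⟨c, hc, hc1, hc2⟩ := F.shared hab hab' (fun hh => hbb' hh.2) h1 h2
  have hca : c = a := by
    rcases hc1 with rfl | rfl
    · rfl
    · rcases hc2 with h' | h'
      · exact absurd h' hab.ne'
      · exact absurd h' hbb'
  rw [hca, F.pv_eq hab'] at hc
  have : t = 0 := F.getVert_inj hab' htl (by omega)
    (by rw [hc, SimpleGraph.Walk.getVert_zero])
  omega

lemma Fam.pv_ne_shareRight {a a' b : Fin m} (hab : a < b) (ha'b : a' < b)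
    (haa' : a ≠ a') {s t : ℕ} (hsl : s < (F.q a b hab).length)
    (htl : t < (F.q a' b ha'b).length) :
    F.pv (a, b) s ≠ F.pv (a', b) t := by
  intro heq
  have h1 := F.pv_mem hab s
  have h2 := F.pv_mem ha'b t
  rw [heq] at h1
  obtain ⟨c, hc, hc1, hc2⟩ := F.shared hab ha'b (fun hh => haa' hh.1) h1 h2
  have hcb : c = b := by
    rcases hc1 with rfl | rfl
    · rcases hc2 with h' | h'
      · exact absurd h' haa'
      · exact absurd h' hab.ne
    · rfl
  rw [hcb, F.pv_eq ha'b] at hc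
  have : t = (F.q a' b ha'b).length := F.getVert_inj ha'b htl.le (le_refl _)
    (by rw [hc, SimpleGraph.Walk.getVert_length])
  omega

lemma Fam.pv_ne_disjoint {a b a' b' : Fin m} (hab : a < b) (ha'b' : a' < b')
    (h1 : a ≠ a') (h2 : a ≠ b') (h3 : b ≠ a') (h4 : b ≠ b') (s t : ℕ) :
    F.pv (a, b) s ≠ F.pv (a', b') t := by
  intro heq
  have m1 := F.pv_mem hab s
  have m2 := F.pv_mem ha'b' t
  rw [heq] at m1
  obtain ⟨c, hc, hc1, hc2⟩ := F.shared hab ha'b' (fun hh => h1 hh.1) m1 m2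
  rcases hc1 with rfl | rfl <;> rcases hc2 with h' | h'
  · exact h1 h'
  · exact h2 h'
  · exact h3 h'
  · exact h4 h'

end FamPart2

section Pairs6Simp
variable {m : ℕ} (a b c d : Fin m)
@[simp] lemma pairs6_0 : pairs6 a b c d 0 = (a, b) := rfl
@[simp] lemma pairs6_1 : pairs6 a b c d 1 = (a, c) := rfl
@[simp] lemma pairs6_2 : pairs6 a b c d 2 = (a, d) := rfl
@[simp] lemma pairs6_3 : pairs6 a b c d 3 = (b, c) := rfl
@[simp] lemma pairs6_4 : pairs6 a b c d 4 = (b, d) := rfl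
@[simp] lemma pairs6_5 : pairs6 a b c d 5 = (c, d) := rfl
end Pairs6Simp
variable {V : Type} {α : Type}

/-- The vertex set of a walk. -/
def walkVerts (G : SimpleGraph V) {x y : V} (p : G.Walk x y) : Set V :=
  {v | v ∈ p.support}

/-- `(f, P)` witnesses a subgraph of `G` isomorphic to a subdivision of the graph `H`:
`f` is an injection identifying the branch vertices, and for every edge `ab` of `H`,
`P a b _` is a path of `G` (of nonzero length, as its ends are distinct) from `f a` to
`f b`; the paths for `(a, b)` and `(b, a)` are reverses of one another (so the data
really lives on the edges of `H`); no branch vertex lies in the interior of any path;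
and the paths for distinct edges of `H` meet exactly in their common ends.  The union
of these paths is then a subgraph of `G` isomorphic to a subdivision of `H` whose
branch vertices are the vertices `f a`. -/
def IsSubdivision (H : SimpleGraph α) (G : SimpleGraph V) (f : α → V)
    (P : ∀ a b : α, H.Adj a b → G.Walk (f a) (f b)) : Prop :=
  Function.Injective f ∧
  (∀ a b (hab : H.Adj a b), (P a b hab).IsPath) ∧
  (∀ a b (hab : H.Adj a b), P b a hab.symm = (P a b hab).reverse) ∧
  (∀ c a b (hab : H.Adj a b), f c ∈ walkVerts G (P a b hab) → c = a ∨ c = b) ∧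
  (∀ a b a' b' (hab : H.Adj a b) (ha'b' : H.Adj a' b'), s(a, b) ≠ s(a', b') →
    walkVerts G (P a b hab) ∩ walkVerts G (P a' b' ha'b') =
      ({f a, f b} : Set V) ∩ {f a', f b'})

/-- The vertex set of the subdivision of `H` in `G` described by `(f, P)`. -/
def subdivisionVerts (H : SimpleGraph α) (G : SimpleGraph V) (f : α → V)
    (P : ∀ a b : α, H.Adj a b → G.Walk (f a) (f b)) : Set V :=
  Set.range f ∪ {v | ∃ (a : α) (b : α) (hab : H.Adj a b), v ∈ (P a b hab).support}

/-- `(f, P)` witnesses an *induced* subgraph of `G` isomorphic to a subdivision of `H`: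
in addition to `IsSubdivision`, every edge of `G` between two vertices of the
subdivision is an edge of one of its paths. -/
def IsInducedSubdivision (H : SimpleGraph α) (G : SimpleGraph V) (f : α → V)
    (P : ∀ a b : α, H.Adj a b → G.Walk (f a) (f b)) : Prop :=
  IsSubdivision H G f P ∧
  ∀ u v, G.Adj u v → u ∈ subdivisionVerts H G f P → v ∈ subdivisionVerts H G f P →
    ∃ (a : α) (b : α) (hab : H.Adj a b), s(u, v) ∈ (P a b hab).edges

section Extract

set_option maxHeartbeats 1600000 in
theorem extract {V : Type} {G : SimpleGraph V} {p r m : ℕ} (hp : 0 < p) (hr : 0 < r)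
    (F : Fam G p m) (idx : Fin (4*p+2*r+10) → Fin m) (hidx : StrictMono idx)
    (c₀ : RColor p)
    (huni : ∀ i j k l : Fin (4*p+2*r+10), i < j → j < k → k < l →
      F.col (idx i) (idx j) (idx k) (idx l) = c₀) :
    (∃ g : completeBipartiteGraph (Fin p) (Fin p) →g G, Function.Injective g) ∨
    ∃ (g : Fin r ⊕ Fin r → V)
      (Q : ∀ a b : Fin r ⊕ Fin r, (completeBipartiteGraph (Fin r) (Fin r)).Adj a b →
        G.Walk (g a) (g b)),
      IsInducedSubdivision (completeBipartiteGraph (Fin r) (Fin r)) G g Q ∧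
      (∀ a b (hab : (completeBipartiteGraph (Fin r) (Fin r)).Adj a b),
        2 ≤ (Q a b hab).length ∧ (Q a b hab).length ≤ p + 1) := by
  by_cases hK : ∃ g : completeBipartiteGraph (Fin p) (Fin p) →g G, Function.Injective g
  · exact Or.inl hK
  right
  have hltF : ∀ (x y : Fin (4*p+2*r+10)), (x:ℕ) < (y:ℕ) → idx x < idx y :=
    fun x y h => hidx (Fin.lt_def.mpr h)
  have hneF : ∀ (x y : Fin (4*p+2*r+10)), (x:ℕ) ≠ (y:ℕ) → idx x ≠ idx y :=
    fun x y h hc => h (congrArg Fin.val (hidx.injective hc))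
  -- transfer of adjacency data between sorted 4-tuples
  have htrans : ∀ (i j k l i' j' k' l' : Fin (4*p+2*r+10)),
      i < j → j < k → k < l → i' < j' → j' < k' → k' < l' →
      ∀ (q6 q6' : Fin 6) (s t : ℕ), s < p + 2 → t < p + 2 →
      G.Adj (F.pv (pairs6 (idx i) (idx j) (idx k) (idx l) q6) s)
            (F.pv (pairs6 (idx i) (idx j) (idx k) (idx l) q6') t) →
      G.Adj (F.pv (pairs6 (idx i') (idx j') (idx k') (idx l') q6) s)
            (F.pv (pairs6 (idx i') (idx j') (idx k') (idx l') q6') t) := by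
    intro i j k l i' j' k' l' h1 h2 h3 h4 h5 h6 q6 q6' s t hs ht hadj
    have e1 : (F.col (idx i) (idx j) (idx k) (idx l)).2 q6 ⟨s, hs⟩ q6' ⟨t, ht⟩ = true :=
      @decide_eq_true _ (Classical.propDecidable _) hadj
    rw [huni i j k l h1 h2 h3, ← huni i' j' k' l' h4 h5 h6] at e1
    exact @of_decide_eq_true _ (Classical.propDecidable _) e1
  -- uniform path length
  have hplen_le : ∀ e : Fin m × Fin m, F.plen e ≤ p + 1 := by
    intro e; unfold Fam.plen; split
    · exact F.lenle _ _ _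
    · omega
  have hlen_min : ∀ (i j : Fin (4*p+2*r+10)), i < j → (j:ℕ) < 4*p+2*r+8 →
      min (F.plen (idx i, idx j)) (p+1) = (c₀.1 0 : ℕ) := by
    intro i j h1 h2
    have e1 := congrFun (congrArg Prod.fst (huni i j ⟨4*p+2*r+8, by omega⟩ ⟨4*p+2*r+9, by omega⟩
      h1 (Fin.lt_def.mpr (show (j:ℕ) < 4*p+2*r+8 from h2)) (Fin.lt_def.mpr (show 4*p+2*r+8 < 4*p+2*r+9 by omega)))) 0
    have e2 : (F.col (idx i) (idx j) (idx ⟨4*p+2*r+8, by omega⟩) (idx ⟨4*p+2*r+9, by omega⟩)).1 0 =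
        (⟨min (F.plen (idx i, idx j)) (p+1), by omega⟩ : Fin (p+2)) := rfl
    rw [e2] at e1
    exact congrArg Fin.val e1
  have hlenuni : ∀ (i j : Fin (4*p+2*r+10)), i < j → (j:ℕ) < 4*p+2*r+8 →
      F.plen (idx i, idx j) = (c₀.1 0 : ℕ) := by
    intro i j h1 h2
    rw [← hlen_min i j h1 h2, Nat.min_eq_left (hplen_le _)]
  obtain ⟨L, hq_len, hLle, hL1⟩ : ∃ L : ℕ,
      (∀ (i j : Fin (4*p+2*r+10)) (h : idx i < idx j), i < j → (j:ℕ) < 4*p+2*r+8 →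
        (F.q (idx i) (idx j) h).length = L) ∧ L ≤ p + 1 ∧ 1 ≤ L := by
    have h01 : (⟨0, by omega⟩ : Fin (4*p+2*r+10)) < ⟨1, by omega⟩ :=
      Fin.lt_def.mpr (show (0:ℕ) < 1 by omega)
    have hbase := hlenuni ⟨0, by omega⟩ ⟨1, by omega⟩ h01 (show (1:ℕ) < 4*p+2*r+8 by omega)
    refine ⟨(c₀.1 0 : ℕ), ?_, ?_, ?_⟩
    · intro i j h h1 h2
      rw [← F.plen_eq h]
      exact hlenuni i j h1 h2
    · rw [← hbase]
      exact hplen_le _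
    · rw [← hbase, F.plen_eq (hidx h01)]
      exact F.len1 _
  -- L ≥ 2 : otherwise the branch vertices form a big clique, giving K_{p,p}
  have hL2 : 2 ≤ L := by
    by_contra hc
    apply hK
    have hadjall : ∀ (a b : ℕ) (hab : a < b) (hb : b < 4*p+2*r+8),
        G.Adj (F.f (idx ⟨a, by omega⟩)) (F.f (idx ⟨b, by omega⟩)) := by
      intro a b hab hb
      have hlt : idx ⟨a, by omega⟩ < idx (⟨b, by omega⟩ : Fin (4*p+2*r+10)) :=
        hltF _ _ (show a < b from hab)
      have hlen1 : (F.q _ _ hlt).length = 1 := by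
        have := hq_len ⟨a, by omega⟩ ⟨b, by omega⟩ hlt
          (Fin.lt_def.mpr (show a < b from hab)) (show b < 4*p+2*r+8 from hb)
        omega
      have h01 := SimpleGraph.Walk.adj_getVert_succ (F.q _ _ hlt) (i := 0) (by omega)
      rw [SimpleGraph.Walk.getVert_zero] at h01
      have hv : (F.q _ _ hlt).getVert (0+1) = F.f (idx ⟨b, by omega⟩) := by
        have : 0 + 1 = (F.q _ _ hlt).length := hlen1.symm
        rw [this, SimpleGraph.Walk.getVert_length]
      rwa [hv] at h01
    refine kpp_builder (fun a : Fin p => F.f (idx ⟨(a:ℕ), by omega⟩))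
      (fun b : Fin p => F.f (idx ⟨p + (b:ℕ), by omega⟩)) ?_ ?_ ?_ ?_
    · intro a b hab
      have h0 := congrArg Fin.val (hidx.injective (F.finj hab))
      have h' : (a:ℕ) = (b:ℕ) := h0
      exact Fin.ext h'
    · intro a b hab
      have h0 := congrArg Fin.val (hidx.injective (F.finj hab))
      have h' : p + (a:ℕ) = p + (b:ℕ) := h0
      exact Fin.ext (by omega)
    · intro a b hab
      have h0 := congrArg Fin.val (hidx.injective (F.finj hab))
      have h' : (a:ℕ) = p + (b:ℕ) := h0
      have := a.isLt
      omega
    · intro a b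
      have := a.isLt
      have := b.isLt
      exact hadjall (a:ℕ) (p + (b:ℕ)) (by omega) (by omega)
  -- C1: no edges between two paths sharing their smaller branch vertex (away from it)
  have hC1 : ∀ (i j k : Fin (4*p+2*r+10)) (hij : i < j) (hjk : j < k)
      (hk : (k:ℕ) < 4*p+2*r+8) (s t : ℕ) (hs1 : 1 ≤ s) (hsl : s ≤ L) (ht1 : 1 ≤ t)
      (htl : t ≤ L), ¬ G.Adj (F.pv (idx i, idx j) s) (F.pv (idx i, idx k) t) := by
    intro i j k hij hjk hk s t hs1 hsl ht1 htl hadj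
    apply hK
    have hkT : k < (⟨4*p+2*r+9, by omega⟩ : Fin (4*p+2*r+10)) :=
      Fin.lt_def.mpr (show (k:ℕ) < 4*p+2*r+9 by omega)
    have huA : ∀ (x y z w : Fin (4*p+2*r+10)), x < y → y < z → z < w →
        G.Adj (F.pv (idx x, idx y) s) (F.pv (idx x, idx z) t) := by
      intro x y z w h1 h2 h3
      have h0 := htrans i j k ⟨4*p+2*r+9, by omega⟩ x y z w hij hjk hkT h1 h2 h3
        0 1 s t (by omega) (by omega) (by rw [pairs6_0, pairs6_1]; exact hadj)
      rwa [pairs6_0, pairs6_1] at h0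
    refine kpp_builder (fun a : Fin p => F.pv (idx ⟨0, by omega⟩, idx ⟨(a:ℕ)+1, by omega⟩) s)
      (fun b : Fin p => F.pv (idx ⟨0, by omega⟩, idx ⟨p+(b:ℕ)+1, by omega⟩) t) ?_ ?_ ?_ ?_
    · intro a b hab
      by_contra hne
      have hva : (a:ℕ) ≠ (b:ℕ) := fun h => hne (Fin.ext h)
      have l1 : idx ⟨0, by omega⟩ < idx (⟨(a:ℕ)+1, by omega⟩ : Fin (4*p+2*r+10)) :=
        hltF _ _ (show (0:ℕ) < (a:ℕ)+1 by omega)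
      have l2 : idx ⟨0, by omega⟩ < idx (⟨(b:ℕ)+1, by omega⟩ : Fin (4*p+2*r+10)) :=
        hltF _ _ (show (0:ℕ) < (b:ℕ)+1 by omega)
      have len1 := hq_len _ _ l1 (Fin.lt_def.mpr (show (0:ℕ) < (a:ℕ)+1 by omega))
        (show (a:ℕ)+1 < 4*p+2*r+8 by omega)
      have len2 := hq_len _ _ l2 (Fin.lt_def.mpr (show (0:ℕ) < (b:ℕ)+1 by omega))
        (show (b:ℕ)+1 < 4*p+2*r+8 by omega)
      exact F.pv_ne_shareLeft l1 l2 (hneF _ _ (show (a:ℕ)+1 ≠ (b:ℕ)+1 by omega))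
        hs1 (by omega) hs1 (by omega) hab
    · intro a b hab
      by_contra hne
      have hva : (a:ℕ) ≠ (b:ℕ) := fun h => hne (Fin.ext h)
      have l1 : idx ⟨0, by omega⟩ < idx (⟨p+(a:ℕ)+1, by omega⟩ : Fin (4*p+2*r+10)) :=
        hltF _ _ (show (0:ℕ) < p+(a:ℕ)+1 by omega)
      have l2 : idx ⟨0, by omega⟩ < idx (⟨p+(b:ℕ)+1, by omega⟩ : Fin (4*p+2*r+10)) :=
        hltF _ _ (show (0:ℕ) < p+(b:ℕ)+1 by omega)
      have len1 := hq_len _ _ l1 (Fin.lt_def.mpr (show (0:ℕ) < p+(a:ℕ)+1 by omega))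
        (show p+(a:ℕ)+1 < 4*p+2*r+8 by omega)
      have len2 := hq_len _ _ l2 (Fin.lt_def.mpr (show (0:ℕ) < p+(b:ℕ)+1 by omega))
        (show p+(b:ℕ)+1 < 4*p+2*r+8 by omega)
      exact F.pv_ne_shareLeft l1 l2 (hneF _ _ (show p+(a:ℕ)+1 ≠ p+(b:ℕ)+1 by omega))
        ht1 (by omega) ht1 (by omega) hab
    · intro a b
      have l1 : idx ⟨0, by omega⟩ < idx (⟨(a:ℕ)+1, by omega⟩ : Fin (4*p+2*r+10)) :=
        hltF _ _ (show (0:ℕ) < (a:ℕ)+1 by omega)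
      have l2 : idx ⟨0, by omega⟩ < idx (⟨p+(b:ℕ)+1, by omega⟩ : Fin (4*p+2*r+10)) :=
        hltF _ _ (show (0:ℕ) < p+(b:ℕ)+1 by omega)
      have len1 := hq_len _ _ l1 (Fin.lt_def.mpr (show (0:ℕ) < (a:ℕ)+1 by omega))
        (show (a:ℕ)+1 < 4*p+2*r+8 by omega)
      have len2 := hq_len _ _ l2 (Fin.lt_def.mpr (show (0:ℕ) < p+(b:ℕ)+1 by omega))
        (show p+(b:ℕ)+1 < 4*p+2*r+8 by omega)
      exact F.pv_ne_shareLeft l1 l2 (hneF _ _ (show (a:ℕ)+1 ≠ p+(b:ℕ)+1 by omega))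
        hs1 (by omega) ht1 (by omega)
    · intro a b
      exact huA ⟨0, by omega⟩ ⟨(a:ℕ)+1, by omega⟩ ⟨p+(b:ℕ)+1, by omega⟩ ⟨2*p+1, by omega⟩
        (Fin.lt_def.mpr (show (0:ℕ) < (a:ℕ)+1 by omega))
        (Fin.lt_def.mpr (show (a:ℕ)+1 < p+(b:ℕ)+1 by omega))
        (Fin.lt_def.mpr (show p+(b:ℕ)+1 < 2*p+1 by omega))
  -- C2: no edges between two paths sharing their larger branch vertex (away from it)
  have hC2 : ∀ (i j k : Fin (4*p+2*r+10)) (hij : i < j) (hjk : j < k)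
      (hk : (k:ℕ) < 4*p+2*r+8) (s t : ℕ) (hsl : s < L) (htl : t < L),
      ¬ G.Adj (F.pv (idx i, idx k) s) (F.pv (idx j, idx k) t) := by
    intro i j k hij hjk hk s t hsl htl hadj
    apply hK
    have hkT : k < (⟨4*p+2*r+9, by omega⟩ : Fin (4*p+2*r+10)) :=
      Fin.lt_def.mpr (show (k:ℕ) < 4*p+2*r+9 by omega)
    have huA : ∀ (x y z w : Fin (4*p+2*r+10)), x < y → y < z → z < w →
        G.Adj (F.pv (idx x, idx z) s) (F.pv (idx y, idx z) t) := by
      intro x y z w h1 h2 h3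
      have h0 := htrans i j k ⟨4*p+2*r+9, by omega⟩ x y z w hij hjk hkT h1 h2 h3
        1 3 s t (by omega) (by omega) (by rw [pairs6_1, pairs6_3]; exact hadj)
      rwa [pairs6_1, pairs6_3] at h0
    refine kpp_builder (fun a : Fin p => F.pv (idx ⟨(a:ℕ), by omega⟩, idx ⟨2*p, by omega⟩) s)
      (fun b : Fin p => F.pv (idx ⟨p+(b:ℕ), by omega⟩, idx ⟨2*p, by omega⟩) t) ?_ ?_ ?_ ?_
    · intro a b hab
      by_contra hne
      have hva : (a:ℕ) ≠ (b:ℕ) := fun h => hne (Fin.ext h)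
      have l1 : idx ⟨(a:ℕ), by omega⟩ < idx (⟨2*p, by omega⟩ : Fin (4*p+2*r+10)) :=
        hltF _ _ (show (a:ℕ) < 2*p by omega)
      have l2 : idx ⟨(b:ℕ), by omega⟩ < idx (⟨2*p, by omega⟩ : Fin (4*p+2*r+10)) :=
        hltF _ _ (show (b:ℕ) < 2*p by omega)
      have len1 := hq_len _ _ l1 (Fin.lt_def.mpr (show (a:ℕ) < 2*p by omega))
        (show 2*p < 4*p+2*r+8 by omega)
      have len2 := hq_len _ _ l2 (Fin.lt_def.mpr (show (b:ℕ) < 2*p by omega))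
        (show 2*p < 4*p+2*r+8 by omega)
      exact F.pv_ne_shareRight l1 l2 (hneF _ _ (show (a:ℕ) ≠ (b:ℕ) from hva))
        (by omega) (by omega) hab
    · intro a b hab
      by_contra hne
      have hva : (a:ℕ) ≠ (b:ℕ) := fun h => hne (Fin.ext h)
      have l1 : idx ⟨p+(a:ℕ), by omega⟩ < idx (⟨2*p, by omega⟩ : Fin (4*p+2*r+10)) :=
        hltF _ _ (show p+(a:ℕ) < 2*p by omega)
      have l2 : idx ⟨p+(b:ℕ), by omega⟩ < idx (⟨2*p, by omega⟩ : Fin (4*p+2*r+10)) :=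
        hltF _ _ (show p+(b:ℕ) < 2*p by omega)
      have len1 := hq_len _ _ l1 (Fin.lt_def.mpr (show p+(a:ℕ) < 2*p by omega))
        (show 2*p < 4*p+2*r+8 by omega)
      have len2 := hq_len _ _ l2 (Fin.lt_def.mpr (show p+(b:ℕ) < 2*p by omega))
        (show 2*p < 4*p+2*r+8 by omega)
      exact F.pv_ne_shareRight l1 l2 (hneF _ _ (show p+(a:ℕ) ≠ p+(b:ℕ) by omega))
        (by omega) (by omega) hab
    · intro a b
      have l1 : idx ⟨(a:ℕ), by omega⟩ < idx (⟨2*p, by omega⟩ : Fin (4*p+2*r+10)) :=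
        hltF _ _ (show (a:ℕ) < 2*p by omega)
      have l2 : idx ⟨p+(b:ℕ), by omega⟩ < idx (⟨2*p, by omega⟩ : Fin (4*p+2*r+10)) :=
        hltF _ _ (show p+(b:ℕ) < 2*p by omega)
      have len1 := hq_len _ _ l1 (Fin.lt_def.mpr (show (a:ℕ) < 2*p by omega))
        (show 2*p < 4*p+2*r+8 by omega)
      have len2 := hq_len _ _ l2 (Fin.lt_def.mpr (show p+(b:ℕ) < 2*p by omega))
        (show 2*p < 4*p+2*r+8 by omega)
      exact F.pv_ne_shareRight l1 l2 (hneF _ _ (show (a:ℕ) ≠ p+(b:ℕ) by omega))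
        (by omega) (by omega)
    · intro a b
      exact huA ⟨(a:ℕ), by omega⟩ ⟨p+(b:ℕ), by omega⟩ ⟨2*p, by omega⟩ ⟨2*p+1, by omega⟩
        (Fin.lt_def.mpr (show (a:ℕ) < p+(b:ℕ) by omega))
        (Fin.lt_def.mpr (show p+(b:ℕ) < 2*p by omega))
        (Fin.lt_def.mpr (show 2*p < 2*p+1 by omega))
  -- C3: no edges between the (1,3)- and (2,4)-paths of a sorted 4-tuple
  have hC3 : ∀ (i j k l : Fin (4*p+2*r+10)), i < j → j < k → k < l →
      ∀ s t : ℕ, s < p+2 → t < p+2 →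
      ¬ G.Adj (F.pv (idx i, idx k) s) (F.pv (idx j, idx l) t) := by
    intro i j k l hij hjk hkl s t hs ht hadj
    apply hK
    have huA : ∀ (x y z w : Fin (4*p+2*r+10)), x < y → y < z → z < w →
        G.Adj (F.pv (idx x, idx z) s) (F.pv (idx y, idx w) t) := by
      intro x y z w h1 h2 h3
      have h0 := htrans i j k l x y z w hij hjk hkl h1 h2 h3
        1 4 s t hs ht (by rw [pairs6_1, pairs6_4]; exact hadj)
      rwa [pairs6_1, pairs6_4] at h0
    refine kpp_builder (fun a : Fin p => F.pv (idx ⟨(a:ℕ), by omega⟩, idx ⟨2*p+(a:ℕ), by omega⟩) s)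
      (fun b : Fin p => F.pv (idx ⟨p+(b:ℕ), by omega⟩, idx ⟨3*p+(b:ℕ), by omega⟩) t) ?_ ?_ ?_ ?_
    · intro a b hab
      by_contra hne
      have hva : (a:ℕ) ≠ (b:ℕ) := fun h => hne (Fin.ext h)
      exact F.pv_ne_disjoint (hltF _ _ (show (a:ℕ) < 2*p+(a:ℕ) by omega))
        (hltF _ _ (show (b:ℕ) < 2*p+(b:ℕ) by omega))
        (hneF _ _ (show (a:ℕ) ≠ (b:ℕ) from hva))
        (hneF _ _ (show (a:ℕ) ≠ 2*p+(b:ℕ) by omega))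
        (hneF _ _ (show 2*p+(a:ℕ) ≠ (b:ℕ) by omega))
        (hneF _ _ (show 2*p+(a:ℕ) ≠ 2*p+(b:ℕ) by omega)) s s hab
    · intro a b hab
      by_contra hne
      have hva : (a:ℕ) ≠ (b:ℕ) := fun h => hne (Fin.ext h)
      exact F.pv_ne_disjoint (hltF _ _ (show p+(a:ℕ) < 3*p+(a:ℕ) by omega))
        (hltF _ _ (show p+(b:ℕ) < 3*p+(b:ℕ) by omega))
        (hneF _ _ (show p+(a:ℕ) ≠ p+(b:ℕ) by omega))
        (hneF _ _ (show p+(a:ℕ) ≠ 3*p+(b:ℕ) by omega))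
        (hneF _ _ (show 3*p+(a:ℕ) ≠ p+(b:ℕ) by omega))
        (hneF _ _ (show 3*p+(a:ℕ) ≠ 3*p+(b:ℕ) by omega)) t t hab
    · intro a b
      exact F.pv_ne_disjoint (hltF _ _ (show (a:ℕ) < 2*p+(a:ℕ) by omega))
        (hltF _ _ (show p+(b:ℕ) < 3*p+(b:ℕ) by omega))
        (hneF _ _ (show (a:ℕ) ≠ p+(b:ℕ) by omega))
        (hneF _ _ (show (a:ℕ) ≠ 3*p+(b:ℕ) by omega))
        (hneF _ _ (show 2*p+(a:ℕ) ≠ p+(b:ℕ) by omega))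
        (hneF _ _ (show 2*p+(a:ℕ) ≠ 3*p+(b:ℕ) by omega)) s t
    · intro a b
      exact huA ⟨(a:ℕ), by omega⟩ ⟨p+(b:ℕ), by omega⟩ ⟨2*p+(a:ℕ), by omega⟩ ⟨3*p+(b:ℕ), by omega⟩
        (Fin.lt_def.mpr (show (a:ℕ) < p+(b:ℕ) by omega))
        (Fin.lt_def.mpr (show p+(b:ℕ) < 2*p+(a:ℕ) by omega))
        (Fin.lt_def.mpr (show 2*p+(a:ℕ) < 3*p+(b:ℕ) by omega))
  -- C4: no edges between the (1,4)- and (2,3)-paths of a sorted 4-tuple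
  have hC4 : ∀ (i j k l : Fin (4*p+2*r+10)), i < j → j < k → k < l →
      ∀ s t : ℕ, s < p+2 → t < p+2 →
      ¬ G.Adj (F.pv (idx i, idx l) s) (F.pv (idx j, idx k) t) := by
    intro i j k l hij hjk hkl s t hs ht hadj
    apply hK
    have huA : ∀ (x y z w : Fin (4*p+2*r+10)), x < y → y < z → z < w →
        G.Adj (F.pv (idx x, idx w) s) (F.pv (idx y, idx z) t) := by
      intro x y z w h1 h2 h3
      have h0 := htrans i j k l x y z w hij hjk hkl h1 h2 h3
        2 3 s t hs ht (by rw [pairs6_2, pairs6_3]; exact hadj)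
      rwa [pairs6_2, pairs6_3] at h0
    refine kpp_builder (fun a : Fin p => F.pv (idx ⟨(a:ℕ), by omega⟩, idx ⟨3*p+(a:ℕ), by omega⟩) s)
      (fun b : Fin p => F.pv (idx ⟨p+(b:ℕ), by omega⟩, idx ⟨2*p+(b:ℕ), by omega⟩) t) ?_ ?_ ?_ ?_
    · intro a b hab
      by_contra hne
      have hva : (a:ℕ) ≠ (b:ℕ) := fun h => hne (Fin.ext h)
      exact F.pv_ne_disjoint (hltF _ _ (show (a:ℕ) < 3*p+(a:ℕ) by omega))
        (hltF _ _ (show (b:ℕ) < 3*p+(b:ℕ) by omega))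
        (hneF _ _ (show (a:ℕ) ≠ (b:ℕ) from hva))
        (hneF _ _ (show (a:ℕ) ≠ 3*p+(b:ℕ) by omega))
        (hneF _ _ (show 3*p+(a:ℕ) ≠ (b:ℕ) by omega))
        (hneF _ _ (show 3*p+(a:ℕ) ≠ 3*p+(b:ℕ) by omega)) s s hab
    · intro a b hab
      by_contra hne
      have hva : (a:ℕ) ≠ (b:ℕ) := fun h => hne (Fin.ext h)
      exact F.pv_ne_disjoint (hltF _ _ (show p+(a:ℕ) < 2*p+(a:ℕ) by omega))
        (hltF _ _ (show p+(b:ℕ) < 2*p+(b:ℕ) by omega))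
        (hneF _ _ (show p+(a:ℕ) ≠ p+(b:ℕ) by omega))
        (hneF _ _ (show p+(a:ℕ) ≠ 2*p+(b:ℕ) by omega))
        (hneF _ _ (show 2*p+(a:ℕ) ≠ p+(b:ℕ) by omega))
        (hneF _ _ (show 2*p+(a:ℕ) ≠ 2*p+(b:ℕ) by omega)) t t hab
    · intro a b
      exact F.pv_ne_disjoint (hltF _ _ (show (a:ℕ) < 3*p+(a:ℕ) by omega))
        (hltF _ _ (show p+(b:ℕ) < 2*p+(b:ℕ) by omega))
        (hneF _ _ (show (a:ℕ) ≠ p+(b:ℕ) by omega))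
        (hneF _ _ (show (a:ℕ) ≠ 2*p+(b:ℕ) by omega))
        (hneF _ _ (show 3*p+(a:ℕ) ≠ p+(b:ℕ) by omega))
        (hneF _ _ (show 3*p+(a:ℕ) ≠ 2*p+(b:ℕ) by omega)) s t
    · intro a b
      exact huA ⟨(a:ℕ), by omega⟩ ⟨p+(b:ℕ), by omega⟩ ⟨2*p+(b:ℕ), by omega⟩ ⟨3*p+(a:ℕ), by omega⟩
        (Fin.lt_def.mpr (show (a:ℕ) < p+(b:ℕ) by omega))
        (Fin.lt_def.mpr (show p+(b:ℕ) < 2*p+(b:ℕ) by omega))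
        (Fin.lt_def.mpr (show 2*p+(b:ℕ) < 3*p+(a:ℕ) by omega))
  -- === Final assembly of the induced subdivision of K_{r,r} ===
  let sel : Fin r ⊕ Fin r → Fin (4*p+2*r+10) :=
    Sum.elim (fun a : Fin r => ⟨(a:ℕ), by omega⟩) (fun b : Fin r => ⟨r+(b:ℕ), by omega⟩)
  let g : Fin r ⊕ Fin r → V := fun x => F.f (idx (sel x))
  have hltsel : ∀ (a b : Fin r), idx (sel (.inl a)) < idx (sel (.inr b)) :=
    fun a b => hltF _ _ (show (a:ℕ) < r+(b:ℕ) by omega)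
  let QP : ∀ a b : Fin r, G.Walk (g (.inl a)) (g (.inr b)) :=
    fun a b => F.q (idx (sel (.inl a))) (idx (sel (.inr b))) (hltsel a b)
  let Q : ∀ a b : Fin r ⊕ Fin r, (completeBipartiteGraph (Fin r) (Fin r)).Adj a b →
      G.Walk (g a) (g b) :=
    fun a b hab => match a, b, hab with
      | .inl a, .inr b, _ => QP a b
      | .inr b, .inl a, _ => (QP a b).reverse
      | .inl _, .inl _, hab => absurd hab (by simp)
      | .inr _, .inr _, hab => absurd hab (by simp)
  have hselinj : Function.Injective sel := by
    rintro (a|a) (b|b) h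
    · have hv0 := congrArg (fun z : Fin (4*p+2*r+10) => z.val) h
      have hv : (a:ℕ) = (b:ℕ) := hv0
      exact congrArg Sum.inl (Fin.ext hv)
    · have hv0 := congrArg (fun z : Fin (4*p+2*r+10) => z.val) h
      have hv : (a:ℕ) = r+(b:ℕ) := hv0
      exact absurd hv (by omega)
    · have hv0 := congrArg (fun z : Fin (4*p+2*r+10) => z.val) h
      have hv : r+(a:ℕ) = (b:ℕ) := hv0
      exact absurd hv (by omega)
    · have hv0 := congrArg (fun z : Fin (4*p+2*r+10) => z.val) h
      have hv : r+(a:ℕ) = r+(b:ℕ) := hv0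
      exact congrArg Sum.inr (Fin.ext (by omega))
  have hginj : Function.Injective g := fun x y h => hselinj (hidx.injective (F.finj h))
  have hQPlen : ∀ a b : Fin r, (QP a b).length = L :=
    fun a b => hq_len _ _ (hltsel a b) (Fin.lt_def.mpr (show (a:ℕ) < r+(b:ℕ) by omega))
      (show r+(b:ℕ) < 4*p+2*r+8 by omega)
  have hpairne : ∀ (a b a' b' : Fin r), ¬(a = a' ∧ b = b') →
      ¬(idx (sel (.inl a)) = idx (sel (.inl a')) ∧ idx (sel (.inr b)) = idx (sel (.inr b'))) := by
    rintro a b a' b' hne ⟨h1, h2⟩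
    exact hne ⟨Sum.inl.inj (hselinj (hidx.injective h1)),
               Sum.inr.inj (hselinj (hidx.injective h2))⟩
  have hcore : ∀ (a b a' b' : Fin r), ¬(a = a' ∧ b = b') →
      ({v | v ∈ (QP a b).support} ∩ {v | v ∈ (QP a' b').support} : Set V) =
        ({g (.inl a), g (.inr b)} : Set V) ∩ {g (.inl a'), g (.inr b')} := by
    intro a b a' b' hne
    apply Set.Subset.antisymm
    · rintro x ⟨hx1, hx2⟩
      obtain ⟨c, hc, hc1, hc2⟩ := F.shared (hltsel a b) (hltsel a' b')
        (hpairne a b a' b' hne) hx1 hx2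
      constructor
      · rcases hc1 with rfl | rfl
        · exact Set.mem_insert_iff.mpr (Or.inl hc)
        · exact Set.mem_insert_iff.mpr (Or.inr (Set.mem_singleton_iff.mpr hc))
      · rcases hc2 with rfl | rfl
        · exact Set.mem_insert_iff.mpr (Or.inl hc)
        · exact Set.mem_insert_iff.mpr (Or.inr (Set.mem_singleton_iff.mpr hc))
    · rintro x ⟨hx1, hx2⟩
      constructor
      · rcases Set.mem_insert_iff.mp hx1 with rfl | hx1'
        · exact SimpleGraph.Walk.start_mem_support _
        · rw [Set.mem_singleton_iff.mp hx1']
          exact SimpleGraph.Walk.end_mem_support _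
      · rcases Set.mem_insert_iff.mp hx2 with rfl | hx2'
        · exact SimpleGraph.Walk.start_mem_support _
        · rw [Set.mem_singleton_iff.mp hx2']
          exact SimpleGraph.Walk.end_mem_support _
  have hrevset : ∀ (a b : Fin r),
      ({v | v ∈ (QP a b).reverse.support} : Set V) = {v | v ∈ (QP a b).support} := by
    intro a b; ext v; simp [SimpleGraph.Walk.support_reverse]
  have hnLL : ∀ (u w : Fin r), ¬ (completeBipartiteGraph (Fin r) (Fin r)).Adj (.inl u) (.inl w) := by
    intro u w hcon; simp at hcon
  have hnRR : ∀ (u w : Fin r), ¬ (completeBipartiteGraph (Fin r) (Fin r)).Adj (.inr u) (.inr w) := by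
    intro u w hcon; simp at hcon
  refine ⟨g, Q, ⟨⟨hginj, ?_, ?_, ?_, ?_⟩, ?_⟩, ?_⟩
  · -- paths
    rintro (a|a) (b|b) hab
    · exact absurd hab (by simp)
    · exact F.path _ _ _
    · exact (F.path _ _ _).reverse
    · exact absurd hab (by simp)
  · -- reverses
    rintro (a|a) (b|b) hab
    · exact absurd hab (by simp)
    · rfl
    · exact (SimpleGraph.Walk.reverse_reverse _).symm
    · exact absurd hab (by simp)
  · -- branch vertices
    rintro c (a|a) (b|b) hab hmem
    · exact absurd hab (by simp)
    · have hm : F.f (idx (sel c)) ∈ (F.q _ _ (hltsel a b)).support := hmem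
      rcases F.branch _ _ _ _ hm with h | h
      · exact Or.inl (hselinj (hidx.injective h))
      · exact Or.inr (hselinj (hidx.injective h))
    · have hm' : F.f (idx (sel c)) ∈ (F.q _ _ (hltsel b a)).support := by
        have hm0 : g c ∈ (QP b a).reverse.support := hmem
        rwa [SimpleGraph.Walk.support_reverse, List.mem_reverse] at hm0
      rcases F.branch _ _ _ _ hm' with h | h
      · exact Or.inr (hselinj (hidx.injective h))
      · exact Or.inl (hselinj (hidx.injective h))
    · exact absurd hab (by simp)
  · -- intersections
    rintro (a|a) (b|b) (a'|a') (b'|b') hab ha'b' hne <;>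
      first
        | exact absurd hab (hnLL _ _)
        | exact absurd hab (hnRR _ _)
        | exact absurd ha'b' (hnLL _ _)
        | exact absurd ha'b' (hnRR _ _)
        | skip
    · exact hcore a b a' b' (by rintro ⟨rfl, rfl⟩; exact hne rfl)
    · show ({v | v ∈ (QP a b).support} : Set V) ∩ {v | v ∈ (QP b' a').reverse.support} =
        ({g (.inl a), g (.inr b)} : Set V) ∩ {g (.inr a'), g (.inl b')}
      rw [hrevset, Set.pair_comm (g (.inr a')) (g (.inl b'))]
      exact hcore a b b' a' (by rintro ⟨rfl, rfl⟩; exact hne Sym2.eq_swap)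
    · show ({v | v ∈ (QP b a).reverse.support} : Set V) ∩ {v | v ∈ (QP a' b').support} =
        ({g (.inr a), g (.inl b)} : Set V) ∩ {g (.inl a'), g (.inr b')}
      rw [hrevset, Set.pair_comm (g (.inr a)) (g (.inl b))]
      exact hcore b a a' b' (by rintro ⟨rfl, rfl⟩; exact hne Sym2.eq_swap)
    · show ({v | v ∈ (QP b a).reverse.support} : Set V) ∩ {v | v ∈ (QP b' a').reverse.support} =
        ({g (.inr a), g (.inl b)} : Set V) ∩ {g (.inr a'), g (.inl b')}
      rw [hrevset, hrevset, Set.pair_comm (g (.inr a)) (g (.inl b)),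
        Set.pair_comm (g (.inr a')) (g (.inl b'))]
      exact hcore b a b' a' (by rintro ⟨rfl, rfl⟩; exact hne rfl)
  · -- induced
    intro u v huv hu hv
    have hsupmem : ∀ (x : V),
        x ∈ subdivisionVerts (completeBipartiteGraph (Fin r) (Fin r)) G g Q →
        ∃ a b : Fin r, x ∈ (QP a b).support := by
      intro x hx
      rcases hx with ⟨c, rfl⟩ | ⟨a, b, hab, hmem⟩
      · rcases c with a | b
        · exact ⟨a, ⟨0, hr⟩, SimpleGraph.Walk.start_mem_support _⟩
        · exact ⟨⟨0, hr⟩, b, SimpleGraph.Walk.end_mem_support _⟩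
      · rcases a with a | a <;> rcases b with b | b
        · exact absurd hab (by simp)
        · exact ⟨a, b, hmem⟩
        · refine ⟨b, a, ?_⟩
          have hm0 : x ∈ (QP b a).reverse.support := hmem
          rwa [SimpleGraph.Walk.support_reverse, List.mem_reverse] at hm0
        · exact absurd hab (by simp)
    obtain ⟨a₁, b₁, hu1⟩ := hsupmem u hu
    obtain ⟨a₂, b₂, hv2⟩ := hsupmem v hv
    have done : ∀ (a b : Fin r), u ∈ (QP a b).support → v ∈ (QP a b).support →
        ∃ (a' : Fin r ⊕ Fin r) (b' : Fin r ⊕ Fin r)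
          (hab : (completeBipartiteGraph (Fin r) (Fin r)).Adj a' b'),
          s(u, v) ∈ (Q a' b' hab).edges := by
      intro a b h1 h2
      exact ⟨.inl a, .inr b, (by simp), F.chord _ _ (hltsel a b) u v h1 h2 huv⟩
    obtain ⟨s, hsv, hsle⟩ := SimpleGraph.Walk.mem_support_iff_exists_getVert.mp hu1
    obtain ⟨t, htv, htle⟩ := SimpleGraph.Walk.mem_support_iff_exists_getVert.mp hv2
    rw [hQPlen a₁ b₁] at hsle
    rw [hQPlen a₂ b₂] at htle
    have hupv : u = F.pv (idx (sel (.inl a₁)), idx (sel (.inr b₁))) s := by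
      rw [F.pv_eq (hltsel a₁ b₁)]; exact hsv.symm
    have hvpv : v = F.pv (idx (sel (.inl a₂)), idx (sel (.inr b₂))) t := by
      rw [F.pv_eq (hltsel a₂ b₂)]; exact htv.symm
    by_cases ha : a₁ = a₂
    · by_cases hb : b₁ = b₂
      · subst ha; subst hb
        exact done a₁ b₁ hu1 hv2
      · subst ha
        by_cases hs0 : s = 0
        · have hu' : u = g (.inl a₁) := by
            rw [← hsv, hs0, SimpleGraph.Walk.getVert_zero]
          refine done a₁ b₂ ?_ hv2
          rw [hu']
          exact SimpleGraph.Walk.start_mem_support _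
        · by_cases ht0 : t = 0
          · have hv' : v = g (.inl a₁) := by
              rw [← htv, ht0, SimpleGraph.Walk.getVert_zero]
            refine done a₁ b₁ hu1 ?_
            rw [hv']
            exact SimpleGraph.Walk.start_mem_support _
          · exfalso
            have hvb : (b₁:ℕ) ≠ (b₂:ℕ) := fun h => hb (Fin.ext h)
            rcases Nat.lt_or_ge (b₁:ℕ) (b₂:ℕ) with hltb | hgeb
            · refine hC1 (sel (.inl a₁)) (sel (.inr b₁)) (sel (.inr b₂))
                (Fin.lt_def.mpr (show (a₁:ℕ) < r+(b₁:ℕ) by omega))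
                (Fin.lt_def.mpr (show r+(b₁:ℕ) < r+(b₂:ℕ) by omega))
                (show r+(b₂:ℕ) < 4*p+2*r+8 by omega) s t (by omega) hsle (by omega) htle ?_
              rw [← hupv, ← hvpv]; exact huv
            · refine hC1 (sel (.inl a₁)) (sel (.inr b₂)) (sel (.inr b₁))
                (Fin.lt_def.mpr (show (a₁:ℕ) < r+(b₂:ℕ) by omega))
                (Fin.lt_def.mpr (show r+(b₂:ℕ) < r+(b₁:ℕ) by omega))
                (show r+(b₁:ℕ) < 4*p+2*r+8 by omega) t s (by omega) htle (by omega) hsle ?_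
              rw [← hupv, ← hvpv]; exact huv.symm
    · by_cases hb : b₁ = b₂
      · subst hb
        by_cases hsL : s = L
        · have hu' : u = g (.inr b₁) := by
            rw [← hsv, hsL, ← hQPlen a₁ b₁, SimpleGraph.Walk.getVert_length]
          refine done a₂ b₁ ?_ hv2
          rw [hu']
          exact SimpleGraph.Walk.end_mem_support _
        · by_cases htL : t = L
          · have hv' : v = g (.inr b₁) := by
              rw [← htv, htL, ← hQPlen a₂ b₁, SimpleGraph.Walk.getVert_length]
            refine done a₁ b₁ hu1 ?_
            rw [hv']
            exact SimpleGraph.Walk.end_mem_support _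
          · exfalso
            have hva : (a₁:ℕ) ≠ (a₂:ℕ) := fun h => ha (Fin.ext h)
            rcases Nat.lt_or_ge (a₁:ℕ) (a₂:ℕ) with hlta | hgea
            · refine hC2 (sel (.inl a₁)) (sel (.inl a₂)) (sel (.inr b₁))
                (Fin.lt_def.mpr (show (a₁:ℕ) < (a₂:ℕ) from hlta))
                (Fin.lt_def.mpr (show (a₂:ℕ) < r+(b₁:ℕ) by omega))
                (show r+(b₁:ℕ) < 4*p+2*r+8 by omega) s t (by omega) (by omega) ?_
              rw [← hupv, ← hvpv]; exact huv
            · refine hC2 (sel (.inl a₂)) (sel (.inl a₁)) (sel (.inr b₁))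
                (Fin.lt_def.mpr (show (a₂:ℕ) < (a₁:ℕ) by omega))
                (Fin.lt_def.mpr (show (a₁:ℕ) < r+(b₁:ℕ) by omega))
                (show r+(b₁:ℕ) < 4*p+2*r+8 by omega) t s (by omega) (by omega) ?_
              rw [← hupv, ← hvpv]; exact huv.symm
      · exfalso
        have hva : (a₁:ℕ) ≠ (a₂:ℕ) := fun h => ha (Fin.ext h)
        have hvb : (b₁:ℕ) ≠ (b₂:ℕ) := fun h => hb (Fin.ext h)
        rcases Nat.lt_or_ge (a₁:ℕ) (a₂:ℕ) with hlta | hgea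
        · rcases Nat.lt_or_ge (b₁:ℕ) (b₂:ℕ) with hltb | hgeb
          · refine hC3 (sel (.inl a₁)) (sel (.inl a₂)) (sel (.inr b₁)) (sel (.inr b₂))
              (Fin.lt_def.mpr (show (a₁:ℕ) < (a₂:ℕ) from hlta))
              (Fin.lt_def.mpr (show (a₂:ℕ) < r+(b₁:ℕ) by omega))
              (Fin.lt_def.mpr (show r+(b₁:ℕ) < r+(b₂:ℕ) by omega))
              s t (by omega) (by omega) ?_
            rw [← hupv, ← hvpv]; exact huv
          · refine hC4 (sel (.inl a₁)) (sel (.inl a₂)) (sel (.inr b₂)) (sel (.inr b₁))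
              (Fin.lt_def.mpr (show (a₁:ℕ) < (a₂:ℕ) from hlta))
              (Fin.lt_def.mpr (show (a₂:ℕ) < r+(b₂:ℕ) by omega))
              (Fin.lt_def.mpr (show r+(b₂:ℕ) < r+(b₁:ℕ) by omega))
              s t (by omega) (by omega) ?_
            rw [← hupv, ← hvpv]; exact huv
        · rcases Nat.lt_or_ge (b₁:ℕ) (b₂:ℕ) with hltb | hgeb
          · refine hC4 (sel (.inl a₂)) (sel (.inl a₁)) (sel (.inr b₁)) (sel (.inr b₂))
              (Fin.lt_def.mpr (show (a₂:ℕ) < (a₁:ℕ) by omega))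
              (Fin.lt_def.mpr (show (a₁:ℕ) < r+(b₁:ℕ) by omega))
              (Fin.lt_def.mpr (show r+(b₁:ℕ) < r+(b₂:ℕ) by omega))
              t s (by omega) (by omega) ?_
            rw [← hupv, ← hvpv]; exact huv.symm
          · refine hC3 (sel (.inl a₂)) (sel (.inl a₁)) (sel (.inr b₂)) (sel (.inr b₁))
              (Fin.lt_def.mpr (show (a₂:ℕ) < (a₁:ℕ) by omega))
              (Fin.lt_def.mpr (show (a₁:ℕ) < r+(b₂:ℕ) by omega))
              (Fin.lt_def.mpr (show r+(b₂:ℕ) < r+(b₁:ℕ) by omega))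
              t s (by omega) (by omega) ?_
            rw [← hupv, ← hvpv]; exact huv.symm
  · -- lengths
    rintro (a|a) (b|b) hab
    · exact absurd hab (by simp)
    · have hl : (Q (.inl a) (.inr b) hab).length = L := hQPlen a b
      constructor <;> omega
    · have hl : (Q (.inr a) (.inl b) hab).length = L := by
        show (QP b a).reverse.length = L
        rw [SimpleGraph.Walk.length_reverse]
        exact hQPlen b a
      constructor <;> omega
    · exact absurd hab (hnRR _ _)

end Extract


/-- **Theorem 1.1 (Lozin–Razgon).** For all `r, p ∈ ℕ⁺` there is `m = m(r,p) ∈ ℕ⁺`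
such that every graph `G` containing a `(≤ p)`-subdivision of `K_m` as a subgraph
(witnessed by branch vertices `f` and subdivision paths `P` of length at most `p + 1`)
contains either `K_{p,p}` as a subgraph (an injective graph homomorphism from
`K_{p,p}`), or a proper `(≤ p)`-subdivision of `K_{r,r}` as an induced subgraph
(witnessed by `g` and `Q`, all paths of length at least `2` and at most `p + 1`). -/
theorem statement_7 (r p : ℕ) (hr : 0 < r) (hp : 0 < p) :
    ∃ m : ℕ, 0 < m ∧
      ∀ (V : Type) [Fintype V] [DecidableEq V] (G : SimpleGraph V) (f : Fin m → V)
        (P : ∀ a b : Fin m, (⊤ : SimpleGraph (Fin m)).Adj a b → G.Walk (f a) (f b)),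
        IsSubdivision ⊤ G f P →
        (∀ a b (hab : (⊤ : SimpleGraph (Fin m)).Adj a b), (P a b hab).length ≤ p + 1) →
        (∃ g : completeBipartiteGraph (Fin p) (Fin p) →g G, Function.Injective g) ∨
        ∃ (g : Fin r ⊕ Fin r → V)
          (Q : ∀ a b : Fin r ⊕ Fin r, (completeBipartiteGraph (Fin r) (Fin r)).Adj a b →
            G.Walk (g a) (g b)),
          IsInducedSubdivision (completeBipartiteGraph (Fin r) (Fin r)) G g Q ∧
          (∀ a b (hab : (completeBipartiteGraph (Fin r) (Fin r)).Adj a b),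
            2 ≤ (Q a b hab).length ∧ (Q a b hab).length ≤ p + 1) := by
  classical
  obtain ⟨M, hM⟩ := ramsey_exists (α := RColor p) 4 (4*p+2*r+10)
  refine ⟨M + 1, by omega, ?_⟩
  intro V _ _ G f P hsub hlen
  obtain ⟨finj, hpath, hrev, hbranch, hinter⟩ := hsub
  have hPadj : ∀ a b : Fin (M+1), a < b → (⊤ : SimpleGraph (Fin (M+1))).Adj a b :=
    fun a b h => by simpa using h.ne
  have hex : ∀ a b : Fin (M+1), ∀ h : a < b, ∃ qab : G.Walk (f a) (f b),
      qab.IsPath ∧ qab.length ≤ p + 1 ∧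
      (∀ x, x ∈ qab.support → x ∈ (P a b (hPadj a b h)).support) ∧
      (∀ x y, x ∈ qab.support → y ∈ qab.support → G.Adj x y → s(x, y) ∈ qab.edges) := by
    intro a b h
    obtain ⟨q1, hq1, hq2, hq3, hq4⟩ := exists_chordless (P a b (hPadj a b h))
    exact ⟨q1, hq1, le_trans hq2 (hlen a b _), hq3, hq4⟩
  choose qq hq1 hq2 hq3 hq4 using hex
  let F : Fam G p (M+1) :=
    { f := f, q := qq, finj := finj, path := hq1, lenle := hq2, chord := hq4,
      branch := fun c a b h hx => hbranch c a b (hPadj a b h) (hq3 a b h _ hx),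
      inter := fun a b a' b' h h' hne x hx hx' => by
        have hset := hinter a b a' b' (hPadj a b h) (hPadj a' b' h') hne
        have hx2 : x ∈ walkVerts G (P a b (hPadj a b h)) := hq3 a b h x hx
        have hx2' : x ∈ walkVerts G (P a' b' (hPadj a' b' h')) := hq3 a' b' h' x hx'
        have hmem : x ∈ ({f a, f b} : Set V) ∩ {f a', f b'} := by
          rw [← hset]; exact ⟨hx2, hx2'⟩
        obtain ⟨m1, m2⟩ := hmem
        constructor
        · rcases Set.mem_insert_iff.mp m1 with h1 | h1
          · exact Or.inl h1
          · exact Or.inr (Set.mem_singleton_iff.mp h1)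
        · rcases Set.mem_insert_iff.mp m2 with h1 | h1
          · exact Or.inl h1
          · exact Or.inr (Set.mem_singleton_iff.mp h1) }
  let fn : ℕ → Fin (M+1) := fun n => ⟨n % (M+1), Nat.mod_lt _ (by omega)⟩
  let χ : Finset ℕ → RColor p := fun T =>
    match T.sort (· ≤ ·) with
    | [a, b, c, d] => F.col (fn a) (fn b) (fn c) (fn d)
    | _ => default
  obtain ⟨S, hSsub, hScard, c₀, hmono⟩ := hM χ (Finset.range (M+1))
    (by rw [Finset.card_range]; omega)
  let σ : Fin (4*p+2*r+10) → ℕ := fun i => ((S.orderIsoOfFin hScard) i : ℕ)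
  have hσmem : ∀ i, σ i ∈ S := fun i => ((S.orderIsoOfFin hScard) i).2
  have hσlt : ∀ i, σ i < M + 1 := fun i => Finset.mem_range.mp (hSsub (hσmem i))
  have hσmono : ∀ i j, i < j → σ i < σ j := by
    intro i j hij
    exact Subtype.coe_lt_coe.mpr ((S.orderIsoOfFin hScard).strictMono hij)
  let idx : Fin (4*p+2*r+10) → Fin (M+1) := fun i => ⟨σ i, hσlt i⟩
  have hidx : StrictMono idx := fun i j hij => Fin.lt_def.mpr (hσmono i j hij)
  have hfn : ∀ i, fn (σ i) = idx i := fun i => Fin.ext (Nat.mod_eq_of_lt (hσlt i))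
  have huni : ∀ i j k l : Fin (4*p+2*r+10), i < j → j < k → k < l →
      F.col (idx i) (idx j) (idx k) (idx l) = c₀ := by
    intro i j k l hij hjk hkl
    have h1 := hσmono i j hij
    have h2 := hσmono j k hjk
    have h3 := hσmono k l hkl
    have hTsub : ({σ i, σ j, σ k, σ l} : Finset ℕ) ⊆ S := by
      intro x hx
      simp only [Finset.mem_insert, Finset.mem_singleton] at hx
      rcases hx with rfl | rfl | rfl | rfl <;> exact hσmem _
    have hTcard := card_quad h1 h2 h3
    have hχ := hmono _ hTsub hTcard
    have hsort := sorted_quad_list h1 h2 h3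
    have hχT : χ ({σ i, σ j, σ k, σ l} : Finset ℕ) =
        F.col (idx i) (idx j) (idx k) (idx l) := by
      show (match ({σ i, σ j, σ k, σ l} : Finset ℕ).sort (· ≤ ·) with
        | [a, b, c, d] => F.col (fn a) (fn b) (fn c) (fn d)
        | _ => default) = _
      rw [hsort]
      show F.col (fn (σ i)) (fn (σ j)) (fn (σ k)) (fn (σ l)) = _
      rw [hfn i, hfn j, hfn k, hfn l]
    rw [← hχT, hχ]
  rcases extract hp hr F idx hidx c₀ huni with h | h
  · exact Or.inl h
  · exact Or.inr h
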